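/- For the system F(x,y) = (x·[(c−4)y + x(x+3y−3) + 2], y·[c(μ+y−1) − 3μ + x(2μ+x+3y−1)]), the point (1, 0) (all-ALLD) is an equilibrium, its Jacobian matrix at (1,0) is triangular with eigenvalues −1 and c(μ−1) − μ, and if c(1−μ) + μ > 0 then both eigenvalues are negative, so (1,0) is a linearly asymptotically stable node. -/

import Mathlib

/-- For the TFT → ALLC replicator-mutator system, `(1,0)` (all-ALLD) is an
equilibrium whose Jacobian is triangular with eigenvalues `−1` and `c(μ−1)−μ`;
if `c(1−μ)+μ > 0` then both eigenvalues are negative, so `(1,0)` is a linearly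
asymptotically stable node. -/
theorem ALLD_vertex_stable_node_TFT_to_ALLC (c μ : ℝ)
    (F1 F2 : ℝ → ℝ → ℝ)
    (hF1 : ∀ x y, F1 x y = x * ((c - 4) * y + x * (x + 3 * y - 3) + 2))
    (hF2 : ∀ x y, F2 x y = y * (c * (μ + y - 1) - 3 * μ + x * (2 * μ + x + 3 * y - 1))) :
    F1 1 0 = 0 ∧ F2 1 0 = 0 ∧
    (deriv (fun x => F1 x 0) 1 = -1 ∧
     deriv (fun y => F1 1 y) 0 = c - 1 ∧
     deriv (fun x => F2 x 0) 1 = 0 ∧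
     deriv (fun y => F2 1 y) 0 = c * (μ - 1) - μ) ∧
    (c * (1 - μ) + μ > 0 → (-1 : ℝ) < 0 ∧ c * (μ - 1) - μ < 0) := by
  have e1 : (fun x => F1 x 0) = fun x : ℝ => x^3 - 3*x^2 + 2*x := by
    funext x; rw [hF1]; ring
  have e2 : (fun y => F1 1 y) = fun y : ℝ => (c - 1) * y := by
    funext y; rw [hF1]; ring
  have e3 : (fun x => F2 x 0) = fun _ : ℝ => (0:ℝ) := by
    funext x; rw [hF2]; ring
  have e4 : (fun y => F2 1 y) = fun y : ℝ => c*y^2 + (c*(μ-1)-μ+3*y)*y := by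
    funext y; rw [hF2]; ring
  refine ⟨by rw [hF1]; ring, by rw [hF2]; ring, ⟨?_, ?_, ?_, ?_⟩, fun h => ⟨by norm_num, by nlinarith⟩⟩
  · rw [e1]
    have h : HasDerivAt (fun x : ℝ => x^3 - 3*x^2 + 2*x) (3*1^2 - 3*(2*1) + 2) 1 := by
      have := ((hasDerivAt_pow 3 (1:ℝ)).sub ((hasDerivAt_pow 2 (1:ℝ)).const_mul 3)).add
        ((hasDerivAt_id (1:ℝ)).const_mul 2)
      exact this.congr_deriv (by norm_num)
    rw [h.deriv]; norm_num
  · rw [e2]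
    simpa using ((hasDerivAt_id (0:ℝ)).const_mul (c-1)).deriv
  · rw [e3]; simp
  · rw [e4]
    have h : HasDerivAt (fun y : ℝ => c*y^2 + (c*(μ-1)-μ+3*y)*y) (c*(μ-1)-μ) 0 := by
      have := ((hasDerivAt_pow 2 (0:ℝ)).const_mul c).add
        ((((hasDerivAt_id (0:ℝ)).const_mul 3).const_add (c*(μ-1)-μ)).mul (hasDerivAt_id 0))
      exact this.congr_deriv (by simp)
    rw [h.deriv]
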